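/- For integers d ≥ 0, h ≥ 1 and reals u, v > 0, the set J(d,h,u,v) = {x ∈ (0,1)∖ℚ : T^d l(x) ≥ u and T^{d+h} l(x) ≥ v} satisfies m(J(d,h,u,v)) ≤ 2 exp(−2^{(h−2)/2} v exp(2^{(d−2)/2} u)), where m is the Gauss measure. -/

import Mathlib

open MeasureTheory Set

/-- The Gauss measure. -/
noncomputable def gaussMeasure : Measure ℝ :=
  (volume.withDensity (fun x => ENNReal.ofReal (1 / (Real.log 2 * (1 + x))))).restrict (Ioo 0 1)

/-- The operator `Tf(x) = x f(α(x))`. -/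
noncomputable def Tgauss (f : ℝ → ℝ) : ℝ → ℝ := fun x => x * f (Int.fract x⁻¹)

open Real Filter Topology

namespace GaussAux

/-- The Gauss map. -/
noncomputable def gmap : ℝ → ℝ := fun x => Int.fract x⁻¹

lemma gmap_measurable : Measurable gmap := measurable_fract.comp measurable_inv

lemma log2_pos : (0:ℝ) < Real.log 2 := Real.log_pos one_lt_two

lemma gmap_mem {x : ℝ} (hx : x ∈ Ioo (0:ℝ) 1) (hirr : Irrational x) :
    gmap x ∈ Ioo (0:ℝ) 1 ∧ Irrational (gmap x) := by
  have hfr : Irrational (gmap x) := (hirr.inv).sub_intCast _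
  refine ⟨⟨lt_of_le_of_ne (Int.fract_nonneg x⁻¹) ?_, Int.fract_lt_one x⁻¹⟩, hfr⟩
  intro hc
  exact hfr.ne_int 0 (by simpa using hc.symm)

lemma gmap_mul_le_half {x : ℝ} (hx : x ∈ Ioo (0:ℝ) 1) : x * gmap x ≤ 1/2 := by
  obtain ⟨hx0, hx1⟩ := hx
  have hinv : 1 < x⁻¹ := (one_lt_inv₀ hx0).mpr hx1
  set m : ℤ := ⌊x⁻¹⌋ with hm
  have hm1 : (1:ℤ) ≤ m := Int.le_floor.mpr (by exact_mod_cast hinv.le)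
  have hm1' : (1:ℝ) ≤ (m:ℝ) := by exact_mod_cast hm1
  have hup : x⁻¹ < (m:ℝ) + 1 := Int.lt_floor_add_one x⁻¹
  have hxlow : ((m:ℝ)+1)⁻¹ < x := by
    have h1 := inv_strictAnti₀ (by positivity : (0:ℝ) < x⁻¹) hup
    rwa [inv_inv] at h1
  have heq : x * gmap x = 1 - x * m := by
    have : gmap x = x⁻¹ - (m:ℝ) := rfl
    rw [this, mul_sub, mul_inv_cancel₀ (ne_of_gt hx0)]
  rw [heq]
  have hhalf : (1:ℝ)/2 ≤ ((m:ℝ)+1)⁻¹ * m := by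
    rw [inv_mul_eq_div, le_div_iff₀ (by linarith)]
    linarith
  have : ((m:ℝ)+1)⁻¹ * m ≤ x * m :=
    mul_le_mul_of_nonneg_right hxlow.le (by linarith)
  linarith

lemma gIter_mem (n : ℕ) {x : ℝ} (hx : x ∈ Ioo (0:ℝ) 1) (hirr : Irrational x) :
    gmap^[n] x ∈ Ioo (0:ℝ) 1 ∧ Irrational (gmap^[n] x) := by
  induction n with
  | zero => exact ⟨hx, hirr⟩
  | succ n ih =>
    rw [Function.iterate_succ_apply']
    exact gmap_mem ih.1 ih.2

/-- Product of iterates of the Gauss map. -/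
noncomputable def gprod (n : ℕ) (x : ℝ) : ℝ := ∏ k ∈ Finset.range n, gmap^[k] x

lemma gprod_succ (n : ℕ) (x : ℝ) : gprod (n+1) x = gprod n x * gmap^[n] x :=
  Finset.prod_range_succ _ _

lemma gprod_add (m n : ℕ) (x : ℝ) :
    gprod (m + n) x = gprod m x * gprod n (gmap^[m] x) := by
  unfold gprod
  rw [Finset.prod_range_add]
  congr 1
  refine Finset.prod_congr rfl fun k _ => ?_
  rw [add_comm m k, Function.iterate_add_apply]

lemma gprod_pos (n : ℕ) {x : ℝ} (hx : x ∈ Ioo (0:ℝ) 1) (hirr : Irrational x) :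
    0 < gprod n x :=
  Finset.prod_pos fun k _ => (gIter_mem k hx hirr).1.1

lemma gprod_le_one (n : ℕ) {x : ℝ} (hx : x ∈ Ioo (0:ℝ) 1) (hirr : Irrational x) :
    gprod n x ≤ 1 :=
  Finset.prod_le_one (fun k _ => (gIter_mem k hx hirr).1.1.le)
    (fun k _ => (gIter_mem k hx hirr).1.2.le)

lemma gprod_le_pow : ∀ (n : ℕ) {x : ℝ}, x ∈ Ioo (0:ℝ) 1 → Irrational x →
    gprod n x ≤ ((1:ℝ)/2)^(n/2) := by
  intro n
  induction n using Nat.strong_induction_on with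
  | _ n ih =>
    match n with
    | 0 => intro x hx hirr; simp [gprod]
    | 1 =>
      intro x hx hirr
      have h1 : gprod 1 x = x := by simp [gprod]
      rw [h1]
      norm_num
      exact hx.2.le
    | (n+2) =>
      intro x hx hirr
      have hsplit : gprod (n+2) x = (x * gmap x) * gprod n (gmap^[2] x) := by
        rw [show n + 2 = 2 + n by ring, gprod_add]
        congr 1
        simp [gprod, Finset.prod_range_succ]
      have hmem2 := gIter_mem 2 hx hirr
      have hih := ih n (by omega) hmem2.1 hmem2.2
      have hpos := gprod_pos n hmem2.1 hmem2.2
      have hbd := gmap_mul_le_half hx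
      have hd : (n+2)/2 = n/2 + 1 := by omega
      rw [hsplit, hd, pow_succ]
      calc x * gmap x * gprod n (gmap^[2] x)
          ≤ (1/2) * ((1:ℝ)/2)^(n/2) := by
            apply mul_le_mul hbd hih hpos.le (by norm_num)
        _ = ((1:ℝ)/2)^(n/2) * (1/2) := by ring

lemma pow_half_le_rpow {n : ℕ} {r : ℝ} (hr : r ≤ ((n/2 : ℕ) : ℝ)) :
    ((1:ℝ)/2)^(n/2) ≤ (2:ℝ)^(-r) := by
  have h1 : ((1:ℝ)/2)^(n/2) = (2:ℝ)^(-(((n/2:ℕ)):ℝ)) := by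
    rw [Real.rpow_neg (by norm_num), Real.rpow_natCast, one_div, inv_pow]
  rw [h1]
  exact (Real.rpow_le_rpow_left_iff (by norm_num)).mpr (by linarith)

lemma Titer : ∀ (n : ℕ) (f : ℝ → ℝ) (x : ℝ),
    Tgauss^[n] f x = gprod n x * f (gmap^[n] x) := by
  intro n
  induction n with
  | zero => intro f x; simp [gprod]
  | succ n ih =>
    intro f x
    calc Tgauss^[n+1] f x = Tgauss^[n] (Tgauss f) x := by
          rw [Function.iterate_succ_apply]
      _ = gprod n x * (Tgauss f) (gmap^[n] x) := ih _ x
      _ = gprod n x * (gmap^[n] x * f (gmap (gmap^[n] x))) := rfl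
      _ = gprod (n+1) x * f (gmap^[n+1] x) := by
          rw [gprod_succ, Function.iterate_succ_apply']; ring

lemma key_pointwise (d h : ℕ) (hh : 1 ≤ h) (u v : ℝ) (hu : 0 < u) (hv : 0 < v) {x : ℝ}
    (hx : x ∈ Ioo (0:ℝ) 1) (hirr : Irrational x)
    (h1 : u ≤ Tgauss^[d] (fun y => Real.log (1 / y)) x)
    (h2 : v ≤ Tgauss^[d + h] (fun y => Real.log (1 / y)) x) :
    gmap^[d+h] x ≤ Real.exp (-((2:ℝ)^(((h:ℝ)-2)/2) * v *
      Real.exp ((2:ℝ)^(((d:ℝ)-2)/2) * u))) := by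
  set rd : ℝ := ((d:ℝ)-2)/2 with hrd_def
  set rh : ℝ := ((h:ℝ)-2)/2 with hrh_def
  have hy := (gIter_mem d hx hirr).1
  have hz := (gIter_mem (d+h) hx hirr).1
  rw [Titer] at h1 h2
  simp only [one_div, Real.log_inv] at h1 h2
  -- first condition
  have hrd : rd ≤ ((d/2 : ℕ) : ℝ) := by
    have hcast : (d:ℝ) ≤ 2*((d/2:ℕ):ℝ) + 1 := by
      exact_mod_cast (by omega : d ≤ 2*(d/2) + 1)
    rw [hrd_def]; linarith
  have hpd : gprod d x ≤ (2:ℝ)^(-rd) :=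
    le_trans (gprod_le_pow d hx hirr) (pow_half_le_rpow hrd)
  have hld : 0 < -Real.log (gmap^[d] x) := by
    have := Real.log_neg hy.1 hy.2; linarith
  have h1' : u ≤ (2:ℝ)^(-rd) * (-Real.log (gmap^[d] x)) :=
    le_trans h1 (mul_le_mul_of_nonneg_right hpd hld.le)
  have hrdpos : (0:ℝ) < (2:ℝ)^rd := Real.rpow_pos_of_pos two_pos rd
  have hid : (2:ℝ)^rd * (2:ℝ)^(-rd) = 1 := by
    rw [← Real.rpow_add two_pos]; simp
  have hlogd : (2:ℝ)^rd * u ≤ -Real.log (gmap^[d] x) := by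
    calc (2:ℝ)^rd * u ≤ (2:ℝ)^rd * ((2:ℝ)^(-rd) * (-Real.log (gmap^[d] x))) :=
          mul_le_mul_of_nonneg_left h1' hrdpos.le
      _ = -Real.log (gmap^[d] x) := by rw [← mul_assoc, hid, one_mul]
  have hyd : gmap^[d] x ≤ Real.exp (-((2:ℝ)^rd * u)) := by
    rw [← Real.exp_log hy.1]
    exact Real.exp_le_exp.mpr (by linarith)
  -- second condition
  have hw := gIter_mem (d+1) hx hirr
  have hsplit : gprod (d + h) x = gprod (d+1) x * gprod (h-1) (gmap^[d+1] x) := by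
    rw [← gprod_add]; congr 1; omega
  have hpd1 : gprod (d+1) x ≤ Real.exp (-((2:ℝ)^rd * u)) := by
    rw [gprod_succ]
    calc gprod d x * gmap^[d] x ≤ 1 * Real.exp (-((2:ℝ)^rd * u)) :=
          mul_le_mul (gprod_le_one d hx hirr) hyd hy.1.le zero_le_one
      _ = _ := one_mul _
  have hrh : rh ≤ (((h-1)/2 : ℕ) : ℝ) := by
    have hcast : (h:ℝ) ≤ 2*(((h-1)/2:ℕ):ℝ) + 2 := by
      exact_mod_cast (by omega : h ≤ 2*((h-1)/2) + 2)
    rw [hrh_def]; linarith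
  have hph : gprod (h-1) (gmap^[d+1] x) ≤ (2:ℝ)^(-rh) :=
    le_trans (gprod_le_pow (h-1) hw.1 hw.2) (pow_half_le_rpow hrh)
  have hpdh : gprod (d+h) x ≤ Real.exp (-((2:ℝ)^rd * u)) * (2:ℝ)^(-rh) := by
    rw [hsplit]
    exact mul_le_mul hpd1 hph (gprod_pos _ hw.1 hw.2).le (Real.exp_pos _).le
  have hlz : 0 < -Real.log (gmap^[d+h] x) := by
    have := Real.log_neg hz.1 hz.2; linarith
  have h2' : v ≤ (Real.exp (-((2:ℝ)^rd * u)) * (2:ℝ)^(-rh)) * (-Real.log (gmap^[d+h] x)) :=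
    le_trans h2 (mul_le_mul_of_nonneg_right hpdh hlz.le)
  set A : ℝ := Real.exp (-((2:ℝ)^rd * u)) * (2:ℝ)^(-rh) with hA_def
  have hApos : 0 < A := by positivity
  set C : ℝ := (2:ℝ)^rh * v * Real.exp ((2:ℝ)^rd * u) with hC_def
  have hAC : A * C = v := by
    rw [hA_def, hC_def, Real.exp_neg, Real.rpow_neg (by norm_num : (0:ℝ) ≤ 2)]
    have h2rh : (2:ℝ)^rh ≠ 0 := (Real.rpow_pos_of_pos two_pos rh).ne'
    have hexp : Real.exp ((2:ℝ)^rd * u) ≠ 0 := (Real.exp_pos _).ne'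
    field_simp
  have hCL : C ≤ -Real.log (gmap^[d+h] x) := by
    have h6 : A * C ≤ A * (-Real.log (gmap^[d+h] x)) := by rw [hAC]; exact h2'
    exact le_of_mul_le_mul_left h6 hApos
  rw [← Real.exp_log hz.1]
  exact Real.exp_le_exp.mpr (by linarith)

/-! ### Measure computations -/

noncomputable def gdens : Measure ℝ :=
  volume.withDensity (fun x => ENNReal.ofReal (1 / (Real.log 2 * (1 + x))))

lemma gaussMeasure_eq : gaussMeasure = gdens.restrict (Ioo 0 1) := rfl

lemma integrable_dens {a b : ℝ} (ha : 0 ≤ a) :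
    IntegrableOn (fun x => 1 / (Real.log 2 * (1 + x))) (Ioo a b) volume := by
  apply (ContinuousOn.integrableOn_Icc ?_).mono_set Ioo_subset_Icc_self
  apply ContinuousOn.div continuousOn_const
  · exact continuousOn_const.mul (continuousOn_const.add continuousOn_id)
  · intro x hx
    have hx0 : 0 ≤ x := le_trans ha hx.1
    exact ne_of_gt (mul_pos log2_pos (by linarith))

lemma integral_dens {a b : ℝ} (ha : 0 ≤ a) (hab : a ≤ b) :
    ∫ x in Ioo a b, 1 / (Real.log 2 * (1 + x))
      = (Real.log (1+b) - Real.log (1+a)) / Real.log 2 := by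
  rw [← integral_Ioc_eq_integral_Ioo, ← intervalIntegral.integral_of_le hab]
  have hrw : ∀ x : ℝ, 1 / (Real.log 2 * (1 + x)) = (Real.log 2)⁻¹ * (1+x)⁻¹ := fun x => by
    rw [one_div, mul_inv]
  simp_rw [hrw]
  rw [intervalIntegral.integral_const_mul]
  have h2 : (∫ x in a..b, (1+x)⁻¹) = Real.log ((1+b)/(1+a)) := by
    have hcomp := intervalIntegral.integral_comp_add_left (a := a) (b := b)
      (fun y => y⁻¹) 1
    rw [hcomp, integral_inv ?_]
    rw [Set.uIcc_of_le (by linarith)]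
    rintro ⟨hle, -⟩
    linarith
  rw [h2, Real.log_div (ne_of_gt (by linarith)) (ne_of_gt (by linarith)), inv_mul_eq_div]

lemma gdens_Ioo {a b : ℝ} (ha : 0 ≤ a) (hab : a ≤ b) :
    gdens (Ioo a b) = ENNReal.ofReal ((Real.log (1+b) - Real.log (1+a)) / Real.log 2) := by
  have hnn : 0 ≤ᵐ[volume.restrict (Ioo a b)] fun x => 1 / (Real.log 2 * (1 + x)) := by
    refine Filter.eventually_of_mem (self_mem_ae_restrict measurableSet_Ioo) ?_
    intro x hx
    have hx0 : 0 ≤ x := le_trans ha hx.1.le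
    exact div_nonneg zero_le_one (mul_nonneg log2_pos.le (by linarith))
  rw [gdens, withDensity_apply _ measurableSet_Ioo,
    ← ofReal_integral_eq_lintegral_ofReal (integrable_dens ha) hnn,
    integral_dens ha hab]

lemma gdens_singleton (a : ℝ) : gdens {a} = 0 :=
  (withDensity_absolutelyContinuous volume _) (Real.volume_singleton)

lemma gdens_between {a b : ℝ} (ha : 0 ≤ a) (hab : a ≤ b) {s : Set ℝ}
    (h1 : Ioo a b ⊆ s) (h2 : s ⊆ Icc a b) :
    gdens s = ENNReal.ofReal ((Real.log (1+b) - Real.log (1+a)) / Real.log 2) := by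
  refine le_antisymm ?_ ?_
  · calc gdens s ≤ gdens (Ioo a b ∪ ({a} ∪ {b})) := by
          apply measure_mono
          intro x hxs
          have hxI := h2 hxs
          rcases eq_or_lt_of_le hxI.1 with hxa | hxa
          · exact Or.inr (Or.inl hxa.symm)
          rcases eq_or_lt_of_le hxI.2 with hxb | hxb
          · exact Or.inr (Or.inr hxb)
          · exact Or.inl ⟨hxa, hxb⟩
      _ ≤ gdens (Ioo a b) + gdens ({a} ∪ {b}) := measure_union_le _ _
      _ ≤ gdens (Ioo a b) + (gdens {a} + gdens {b}) := by
          gcongr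
          exact measure_union_le _ _
      _ = gdens (Ioo a b) := by rw [gdens_singleton, gdens_singleton, add_zero, add_zero]
      _ = _ := gdens_Ioo ha hab
  · rw [← gdens_Ioo ha hab]
    exact measure_mono h1

lemma gauss_between {a b : ℝ} (ha : 0 ≤ a) (hab : a ≤ b) (hb : b ≤ 1) {s : Set ℝ}
    (hs : MeasurableSet s) (h1 : Ioo a b ⊆ s) (h2 : s ∩ Ioo 0 1 ⊆ Icc a b) :
    gaussMeasure s = ENNReal.ofReal ((Real.log (1+b) - Real.log (1+a)) / Real.log 2) := by
  rw [gaussMeasure_eq, Measure.restrict_apply hs]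
  apply gdens_between ha hab
  · intro x hxI
    exact ⟨h1 hxI, lt_of_le_of_lt ha hxI.1, lt_of_lt_of_le hxI.2 hb⟩
  · exact h2

lemma gauss_Icc {a b : ℝ} (ha : 0 < a) (hab : a ≤ b) (hb : b ≤ 1) :
    gaussMeasure (Icc a b)
      = ENNReal.ofReal ((Real.log (1+b) - Real.log (1+a)) / Real.log 2) :=
  gauss_between ha.le hab hb measurableSet_Icc Ioo_subset_Icc_self (fun _ hx => hx.1)

lemma gauss_Iic {a : ℝ} (h0 : 0 ≤ a) (h1 : a ≤ 1) :
    gaussMeasure (Iic a) = ENNReal.ofReal (Real.log (1+a) / Real.log 2) := by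
  have := gauss_between (a := 0) (b := a) le_rfl h0 h1 measurableSet_Iic
    (fun x hx => hx.2.le) (fun x hx => ⟨hx.2.1.le, hx.1⟩)
  simpa using this

lemma gauss_univ : gaussMeasure univ = ENNReal.ofReal 1 := by
  have := gauss_between (a := 0) (b := 1) le_rfl zero_le_one le_rfl MeasurableSet.univ
    (fun x _ => mem_univ x) (fun x hx => ⟨hx.2.1.le, hx.2.2.le⟩)
  rw [this, show ((1:ℝ)+1) = 2 from by norm_num, show ((1:ℝ)+0) = 1 from by norm_num,
    Real.log_one, sub_zero, div_self (ne_of_gt log2_pos)]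

instance : IsFiniteMeasure gaussMeasure :=
  ⟨by rw [gauss_univ]; exact ENNReal.ofReal_lt_top⟩

end GaussAux

namespace GaussAux

lemma gauss_map_gmap : gaussMeasure.map gmap = gaussMeasure := by
  refine Measure.ext_of_Iic _ _ (fun a => ?_)
  rw [Measure.map_apply gmap_measurable measurableSet_Iic]
  rcases lt_or_ge a 0 with hneg | h0
  · have hpre : gmap ⁻¹' Iic a = ∅ := by
      ext x
      simp only [mem_preimage, mem_Iic, mem_empty_iff_false, iff_false, not_le]
      exact lt_of_lt_of_le hneg (Int.fract_nonneg x⁻¹)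
    have hIic : Iic a ∩ Ioo (0:ℝ) 1 = ∅ := by
      apply eq_empty_iff_forall_notMem.mpr
      rintro x ⟨hxa, hx0, -⟩
      linarith [mem_Iic.mp hxa]
    rw [hpre, measure_empty, gaussMeasure_eq, Measure.restrict_apply measurableSet_Iic,
      hIic, measure_empty]
  rcases lt_or_ge a 1 with h1 | h1
  · -- main case : 0 ≤ a < 1
    set I : ℕ → Set ℝ := fun n => Icc (((n:ℝ)+1+a)⁻¹) (((n:ℝ)+1)⁻¹) with hI_def
    set B : Set ℝ := ⋃ n : ℕ, I n with hB_def
    have hBm : MeasurableSet B := MeasurableSet.iUnion fun n => measurableSet_Icc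
    -- the preimage coincides with B inside (0,1)
    have hpre : gmap ⁻¹' Iic a ∩ Ioo 0 1 = B ∩ Ioo 0 1 := by
      ext x
      simp only [hB_def, hI_def, mem_inter_iff, mem_preimage, mem_Iic, mem_Ioo,
        mem_iUnion, mem_Icc]
      constructor
      · rintro ⟨hfr, hx0, hx1⟩
        refine ⟨?_, hx0, hx1⟩
        have hxinv1 : 1 < x⁻¹ := (one_lt_inv₀ hx0).mpr hx1
        set m : ℤ := ⌊x⁻¹⌋ with hm
        have hm1 : (1:ℤ) ≤ m := Int.le_floor.mpr (by exact_mod_cast hxinv1.le)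
        have hmpos : (0:ℝ) < (m:ℝ) := by exact_mod_cast (by omega : (0:ℤ) < m)
        refine ⟨(m-1).toNat, ?_, ?_⟩
        · have hcast : (((m-1).toNat : ℕ) : ℝ) + 1 = (m:ℝ) := by
            have h' : ((m-1).toNat : ℤ) = m - 1 := Int.toNat_of_nonneg (by omega)
            have : (((m-1).toNat : ℕ) : ℝ) = (m:ℝ) - 1 := by exact_mod_cast h'
            linarith
          rw [hcast]
          have hub : x⁻¹ ≤ (m:ℝ) + a := by
            have hfr' : gmap x = x⁻¹ - (m:ℝ) := rfl
            rw [hfr'] at hfr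
            linarith
          have := inv_anti₀ (by positivity : (0:ℝ) < x⁻¹) hub
          rwa [inv_inv] at this
        · have hcast : (((m-1).toNat : ℕ) : ℝ) + 1 = (m:ℝ) := by
            have h' : ((m-1).toNat : ℤ) = m - 1 := Int.toNat_of_nonneg (by omega)
            have : (((m-1).toNat : ℕ) : ℝ) = (m:ℝ) - 1 := by exact_mod_cast h'
            linarith
          rw [hcast]
          have hlb : (m:ℝ) ≤ x⁻¹ := Int.floor_le x⁻¹
          have := inv_anti₀ hmpos hlb
          rwa [inv_inv] at this
      · rintro ⟨⟨n, hn1, hn2⟩, hx0, hx1⟩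
        refine ⟨?_, hx0, hx1⟩
        have hlb : ((n:ℝ)+1) ≤ x⁻¹ := by
          have := inv_anti₀ hx0 hn2
          rwa [inv_inv] at this
        have hub : x⁻¹ ≤ (n:ℝ)+1+a := by
          have h' := inv_anti₀ (by positivity : (0:ℝ) < ((n:ℝ)+1+a)⁻¹) hn1
          rwa [inv_inv] at h'
        have hfl : ⌊x⁻¹⌋ = (n:ℤ) + 1 := by
          rw [Int.floor_eq_iff]
          constructor
          · push_cast; linarith
          · push_cast; linarith
        have hfr' : gmap x = x⁻¹ - ((n:ℝ)+1) := by
          rw [show gmap x = x⁻¹ - (⌊x⁻¹⌋:ℝ) from rfl, hfl]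
          push_cast; ring
        rw [hfr']
        linarith
    -- disjointness of the intervals
    have hdisj : Pairwise (Function.onFun Disjoint I) := by
      have key : ∀ m n : ℕ, m < n → Disjoint (I m) (I n) := by
        intro m n hmn
        rw [Set.disjoint_left]
        rintro x ⟨hx1, _⟩ ⟨_, hx4⟩
        have hcast : (m:ℝ) + 1 ≤ (n:ℝ) := by exact_mod_cast hmn
        have h5 : ((n:ℝ)+1)⁻¹ < ((m:ℝ)+1+a)⁻¹ := by
          apply inv_strictAnti₀ (by positivity)
          linarith
        linarith
      intro m n hmn
      rcases lt_or_gt_of_ne hmn with hlt | hlt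
      · exact key m n hlt
      · exact (key n m hlt).symm
    -- each interval has an explicit measure
    set c : ℕ → ℝ := fun n =>
      (Real.log (1+((n:ℝ)+1)⁻¹) - Real.log (1+((n:ℝ)+1+a)⁻¹)) / Real.log 2 with hc_def
    have hIcc : ∀ n : ℕ, gaussMeasure (I n) = ENNReal.ofReal (c n) := by
      intro n
      refine gauss_Icc (by positivity) ?_ ?_
      · exact inv_anti₀ (by positivity) (by linarith)
      · rw [inv_le_one_iff₀]
        right; linarith
    -- telescoping sum
    set g : ℕ → ℝ := fun n => (Real.log ((n:ℝ)+1) - Real.log ((n:ℝ)+1+a)) / Real.log 2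
      with hg_def
    have hc_eq : ∀ n : ℕ, c n = g (n+1) - g n := by
      intro n
      have e1 : 1 + ((n:ℝ)+1)⁻¹ = ((n:ℝ)+2)/((n:ℝ)+1) := by
        field_simp; ring
      have e2 : 1 + ((n:ℝ)+1+a)⁻¹ = ((n:ℝ)+2+a)/((n:ℝ)+1+a) := by
        rw [eq_div_iff (by positivity)]
        field_simp
        ring
      rw [hc_def]
      simp only
      rw [e1, e2, Real.log_div (by positivity) (by positivity),
        Real.log_div (by positivity) (by positivity), hg_def]
      simp only
      push_cast
      ring
    have hcnn : ∀ n, 0 ≤ c n := by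
      intro n
      apply div_nonneg _ log2_pos.le
      rw [sub_nonneg]
      apply Real.log_le_log (by positivity)
      have : ((n:ℝ)+1+a)⁻¹ ≤ ((n:ℝ)+1)⁻¹ := inv_anti₀ (by positivity) (by linarith)
      linarith
    have hsum_eq : ∀ n : ℕ, ∑ i ∈ Finset.range n, c i = g n - g 0 := by
      intro n
      calc ∑ i ∈ Finset.range n, c i = ∑ i ∈ Finset.range n, (g (i+1) - g i) :=
            Finset.sum_congr rfl fun i _ => hc_eq i
        _ = g n - g 0 := Finset.sum_range_sub g n
    have hg_nonpos : ∀ n : ℕ, g n ≤ 0 := by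
      intro n
      apply div_nonpos_of_nonpos_of_nonneg _ log2_pos.le
      rw [sub_nonpos]
      exact Real.log_le_log (by positivity) (by linarith)
    have hsum : Summable c := by
      apply summable_of_sum_range_le (c := -g 0) hcnn
      intro n
      rw [hsum_eq n]
      have := hg_nonpos n
      linarith
    have hg0 : g 0 = -(Real.log (1+a) / Real.log 2) := by
      rw [hg_def]
      simp only
      rw [show ((0:ℕ):ℝ) + 1 = 1 from by norm_num, Real.log_one]
      ring
    have hglim : Tendsto g atTop (𝓝 0) := by
      have hrw : ∀ n : ℕ, g n = -(Real.log (1 + a/((n:ℝ)+1)) / Real.log 2) := by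
        intro n
        have e3 : 1 + a/((n:ℝ)+1) = ((n:ℝ)+1+a)/((n:ℝ)+1) := by
          field_simp
        rw [hg_def]
        simp only
        rw [e3, Real.log_div (by positivity) (by positivity)]
        ring
      have h1' : Tendsto (fun n : ℕ => a/((n:ℝ)+1)) atTop (𝓝 0) := by
        have hcomp := (tendsto_const_div_atTop_nhds_zero_nat a).comp
          (Filter.tendsto_add_atTop_nat 1)
        apply hcomp.congr
        intro n
        simp only [Function.comp_apply]
        push_cast
        ring
      have h2' : Tendsto (fun n : ℕ => Real.log (1 + a/((n:ℝ)+1))) atTop (𝓝 0) := by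
        have h3' : Tendsto (fun n : ℕ => 1 + a/((n:ℝ)+1)) atTop (𝓝 1) := by
          have := tendsto_const_nhds (x := (1:ℝ)) (f := atTop (α := ℕ)) |>.add h1'
          simpa using this
        have h4' := (Real.continuousAt_log (by norm_num : (1:ℝ) ≠ 0)).tendsto.comp h3'
        simpa [Function.comp_def] using h4'
      have h5' : Tendsto (fun n : ℕ => -(Real.log (1 + a/((n:ℝ)+1)) / Real.log 2)) atTop
          (𝓝 (-(0 / Real.log 2))) := (h2'.div_const _).neg
      rw [show -((0:ℝ) / Real.log 2) = 0 from by ring] at h5'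
      exact h5'.congr fun n => (hrw n).symm
    have htsum : ∑' n, c n = Real.log (1+a) / Real.log 2 := by
      have hA := hsum.hasSum.tendsto_sum_nat
      have hB : Tendsto (fun n => ∑ i ∈ Finset.range n, c i) atTop (𝓝 (0 - g 0)) := by
        refine Tendsto.congr (fun n => (hsum_eq n).symm) ?_
        exact hglim.sub_const (g 0)
      have := tendsto_nhds_unique hA hB
      rw [this, hg0]
      ring
    -- put everything together
    have hL : gaussMeasure (gmap ⁻¹' Iic a) = gaussMeasure B := by
      rw [gaussMeasure_eq, Measure.restrict_apply (gmap_measurable measurableSet_Iic),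
        Measure.restrict_apply hBm, hpre]
    rw [hL, hB_def, measure_iUnion hdisj (fun n => measurableSet_Icc)]
    have : ∑' n, gaussMeasure (I n) = ∑' n, ENNReal.ofReal (c n) := by
      exact tsum_congr hIcc
    rw [this, ← ENNReal.ofReal_tsum_of_nonneg hcnn hsum, htsum, gauss_Iic h0 h1.le]
  · -- case 1 ≤ a
    have hpre : gmap ⁻¹' Iic a = univ :=
      eq_univ_of_forall fun x => le_trans (Int.fract_lt_one x⁻¹).le h1
    rw [hpre]
    have h2 := gauss_between (a := 0) (b := 1) le_rfl zero_le_one le_rfl measurableSet_Iic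
      (fun x hx => le_trans hx.2.le h1) (fun x hx => ⟨hx.2.1.le, hx.2.2.le⟩)
    rw [gauss_univ, h2, show ((1:ℝ)+1) = 2 from by norm_num,
      show ((1:ℝ)+0) = 1 from by norm_num, Real.log_one, sub_zero,
      div_self (ne_of_gt log2_pos)]

lemma gauss_mp : MeasurePreserving gmap gaussMeasure gaussMeasure :=
  ⟨gmap_measurable, gauss_map_gmap⟩

end GaussAux

open GaussAux in
theorem measure_J_bound (d h : ℕ) (hh : 1 ≤ h) (u v : ℝ) (hu : 0 < u) (hv : 0 < v) :
    gaussMeasure {x : ℝ | x ∈ Ioo (0:ℝ) 1 ∧ Irrational x ∧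
        u ≤ Tgauss^[d] (fun y => Real.log (1 / y)) x ∧
        v ≤ Tgauss^[d + h] (fun y => Real.log (1 / y)) x} ≤
      ENNReal.ofReal (2 * Real.exp (-(2 : ℝ) ^ (((h : ℝ) - 2) / 2) * v *
        Real.exp ((2 : ℝ) ^ (((d : ℝ) - 2) / 2) * u))) := by
  set C : ℝ := (2:ℝ)^(((h:ℝ)-2)/2) * v * Real.exp ((2:ℝ)^(((d:ℝ)-2)/2) * u) with hC_def
  have hCpos : 0 < C := by
    rw [hC_def]
    positivity
  have hgoal : -(2:ℝ)^(((h:ℝ)-2)/2) * v * Real.exp ((2:ℝ)^(((d:ℝ)-2)/2) * u) = -C := by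
    rw [hC_def]; ring
  rw [hgoal]
  have hsub : {x : ℝ | x ∈ Ioo (0:ℝ) 1 ∧ Irrational x ∧
      u ≤ Tgauss^[d] (fun y => Real.log (1 / y)) x ∧
      v ≤ Tgauss^[d + h] (fun y => Real.log (1 / y)) x} ⊆
      gmap^[d+h] ⁻¹' (Iic (Real.exp (-C))) := by
    rintro x ⟨hx, hirr, h1, h2⟩
    simp only [mem_preimage, mem_Iic]
    exact key_pointwise d h hh u v hu hv hx hirr h1 h2
  calc gaussMeasure _ ≤ gaussMeasure (gmap^[d+h] ⁻¹' (Iic (Real.exp (-C)))) :=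
        measure_mono hsub
    _ = gaussMeasure (Iic (Real.exp (-C))) :=
        (gauss_mp.iterate (d+h)).measure_preimage measurableSet_Iic.nullMeasurableSet
    _ = ENNReal.ofReal (Real.log (1 + Real.exp (-C)) / Real.log 2) :=
        gauss_Iic (Real.exp_pos _).le (Real.exp_le_one_iff.mpr (by linarith))
    _ ≤ ENNReal.ofReal (2 * Real.exp (-C)) := by
        apply ENNReal.ofReal_le_ofReal
        have hexp : 0 < Real.exp (-C) := Real.exp_pos _
        have hlog : Real.log (1 + Real.exp (-C)) ≤ Real.exp (-C) := by
          have := Real.log_le_sub_one_of_pos (by linarith : 0 < 1 + Real.exp (-C))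
          linarith
        have hl2 := Real.log_two_gt_d9
        rw [div_le_iff₀ log2_pos]
        nlinarith
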